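/- arXiv:2310.20173 — 4 statements merged into one kernel-verified Lean document; each statement's English description precedes it below -/
import Mathlib

section
/- Suppose Δ := 4δ² − 8κ_r²μ₁²σ₂²δ/(μ₂σ₁²) > 0, and set d₁ = (2δ + √Δ)/(4ρσ₂²) and d₂ = (2δ − √Δ)/(4ρσ₂²). Then ξ(t) = d₁ d₂ (e^{√Δ(T−t)} − 1)/(d₁ e^{√Δ(T−t)} − d₂) satisfies the Riccati equation ξ'(t) + 2ρσ₂²ξ(t)² − 2δξ(t) + κ_r²μ₁²δ/(ρμ₂σ₁²) = 0 on [0,T] with ξ(T) = 0, and moreover ξ(t) > 0 for all t ∈ [0,T). -/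
/-- Δ > 0 case: ξ(t) = d₁d₂(e^{√Δ(T−t)}−1)/(d₁e^{√Δ(T−t)}−d₂) satisfies the Riccati equation
ξ' + 2ρσ₂²ξ² − 2δξ + κr²μ₁²δ/(ρμ₂σ₁²) = 0 on [0,T] with ξ(T)=0, and ξ(t) > 0 on [0,T). -/
theorem stmt_4 (δ ρ σ₂ σ₁ μ₂ κr μ₁ T : ℝ) (hδ : 0 < δ) (hρ : 0 < ρ) (hσ₂ : 0 < σ₂)
    (hσ₁ : 0 < σ₁) (hμ₂ : 0 < μ₂) (hκμ : κr * μ₁ ≠ 0) (hT : 0 < T)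
    (Δ d₁ d₂ : ℝ)
    (hΔ : Δ = 4 * δ ^ 2 - 8 * κr ^ 2 * μ₁ ^ 2 * σ₂ ^ 2 * δ / (μ₂ * σ₁ ^ 2))
    (hΔpos : 0 < Δ)
    (hd₁ : d₁ = (2 * δ + Real.sqrt Δ) / (4 * ρ * σ₂ ^ 2))
    (hd₂ : d₂ = (2 * δ - Real.sqrt Δ) / (4 * ρ * σ₂ ^ 2))
    (ξ : ℝ → ℝ)
    (hξ : ξ = fun t => d₁ * d₂ * (Real.exp (Real.sqrt Δ * (T - t)) - 1) /
      (d₁ * Real.exp (Real.sqrt Δ * (T - t)) - d₂)) :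
    (∀ t ∈ Set.Icc (0 : ℝ) T,
      HasDerivAt ξ (2 * δ * ξ t - 2 * ρ * σ₂ ^ 2 * (ξ t) ^ 2
        - κr ^ 2 * μ₁ ^ 2 * δ / (ρ * μ₂ * σ₁ ^ 2)) t) ∧
    ξ T = 0 ∧
    (∀ t ∈ Set.Ico (0 : ℝ) T, 0 < ξ t) := by
  set s := Real.sqrt Δ with hsdef
  have hspos : 0 < s := Real.sqrt_pos.2 hΔpos
  have hs2 : s ^ 2 = Δ := Real.sq_sqrt hΔpos.le
  have hκμ2 : 0 < κr ^ 2 * μ₁ ^ 2 := by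
    have h : 0 < (κr * μ₁) ^ 2 := by positivity
    nlinarith [h]
  have hden : 0 < μ₂ * σ₁ ^ 2 := by positivity
  have hΔlt : Δ < 4 * δ ^ 2 := by
    rw [hΔ]
    have h8 : 0 < 8 * κr ^ 2 * μ₁ ^ 2 * σ₂ ^ 2 * δ := by nlinarith [mul_pos (mul_pos hκμ2 (pow_pos hσ₂ 2)) hδ]
    have := div_pos h8 hden
    linarith
  have hslt : s < 2 * δ := by nlinarith
  have hd₂pos : 0 < d₂ := by
    rw [hd₂]; exact div_pos (by linarith) (by positivity)
  have hd₁pos : 0 < d₁ := by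
    rw [hd₁]; exact div_pos (by positivity) (by positivity)
  -- key algebraic relations
  have hseq : s = 2 * ρ * σ₂ ^ 2 * (d₁ - d₂) := by
    rw [hd₁, hd₂]; field_simp; ring
  have hdlt : d₂ < d₁ := by
    have hc : 0 < 2 * ρ * σ₂ ^ 2 := by positivity
    nlinarith [hspos, hseq, hc]
  have hδeq : δ = ρ * σ₂ ^ 2 * (d₁ + d₂) := by
    rw [hd₁, hd₂]; field_simp; ring
  have hceq : κr ^ 2 * μ₁ ^ 2 * δ / (ρ * μ₂ * σ₁ ^ 2) = 2 * ρ * σ₂ ^ 2 * (d₁ * d₂) := by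
    have h1 : 8 * κr ^ 2 * μ₁ ^ 2 * σ₂ ^ 2 * δ = (4 * δ ^ 2 - s ^ 2) * (μ₂ * σ₁ ^ 2) := by
      rw [hs2, hΔ]; field_simp; ring
    rw [hd₁, hd₂]
    rw [div_eq_iff (by positivity)]
    field_simp
    linear_combination 2 * h1
  -- denominator positivity for t ≤ T
  have hDpos : ∀ t : ℝ, t ≤ T → 0 < d₁ * Real.exp (s * (T - t)) - d₂ := by
    intro t ht
    have hexp : (1 : ℝ) ≤ Real.exp (s * (T - t)) := by
      rw [Real.one_le_exp_iff]
      have : 0 ≤ T - t := by linarith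
      positivity
    nlinarith
  refine ⟨?_, ?_, ?_⟩
  · intro t ht
    obtain ⟨ht0, htT⟩ := ht
    set E := Real.exp (s * (T - t)) with hE
    have hD : d₁ * E - d₂ ≠ 0 := (hDpos t htT).ne'
    have hf : HasDerivAt (fun u : ℝ => s * (T - u)) (-s) t := by
      simpa using ((hasDerivAt_id t).const_sub T).const_mul s
    have hExp : HasDerivAt (fun u : ℝ => Real.exp (s * (T - u))) (E * (-s)) t := hf.exp
    have hN : HasDerivAt (fun u : ℝ => d₁ * d₂ * (Real.exp (s * (T - u)) - 1))
        (d₁ * d₂ * (E * (-s))) t := (hExp.sub_const 1).const_mul _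
    have hDd : HasDerivAt (fun u : ℝ => d₁ * Real.exp (s * (T - u)) - d₂)
        (d₁ * (E * (-s))) t := (hExp.const_mul d₁).sub_const d₂
    have hder := hN.div hDd hD
    have hξt : ξ t = d₁ * d₂ * (E - 1) / (d₁ * E - d₂) := by rw [hξ]
    have goal_eq : 2 * δ * ξ t - 2 * ρ * σ₂ ^ 2 * (ξ t) ^ 2
        - κr ^ 2 * μ₁ ^ 2 * δ / (ρ * μ₂ * σ₁ ^ 2)
        = (d₁ * d₂ * (E * (-s)) * (d₁ * E - d₂) - d₁ * d₂ * (E - 1) * (d₁ * (E * (-s))))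
          / (d₁ * E - d₂) ^ 2 := by
      rw [hξt, hceq, hδeq, hseq]
      field_simp
      ring
    rw [goal_eq, hξ]
    exact hder
  · rw [hξ]
    simp
  · intro t ht
    obtain ⟨ht0, htT⟩ := ht
    rw [hξ]
    have hx : 0 < s * (T - t) := mul_pos hspos (by linarith)
    have hexp : (1 : ℝ) < Real.exp (s * (T - t)) := by
      simpa using Real.exp_lt_exp.mpr hx
    have hDp := hDpos t htT.le
    apply div_pos ?_ hDp
    have : 0 < Real.exp (s * (T - t)) - 1 := by linarith
    positivity
end

section
/- Suppose Δ := 4δ² − 8κ_r²μ₁²σ₂²δ/(μ₂σ₁²) = 0 (equivalently δ = 2κ_r²μ₁²σ₂²/(μ₂σ₁²)). Then ξ(t) = (κ_r²μ₁²/σ₁²) · (T−t)/(ρμ₂(T−t) + ρμ₂/δ) satisfies the Riccati equation ξ'(t) + 2ρσ₂²ξ(t)² − 2δξ(t) + κ_r²μ₁²δ/(ρμ₂σ₁²) = 0 on [0,T] with terminal condition ξ(T) = 0. -/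
/-- Δ = 0 case: ξ(t) = (κr²μ₁²/σ₁²)(T−t)/(ρμ₂(T−t)+ρμ₂/δ) satisfies the Riccati equation
ξ' + 2ρσ₂²ξ² − 2δξ + κr²μ₁²δ/(ρμ₂σ₁²) = 0 on [0,T] with ξ(T) = 0. -/
theorem stmt_5 (δ ρ σ₂ σ₁ μ₂ κr μ₁ T : ℝ) (hδ : 0 < δ) (hρ : 0 < ρ) (hσ₂ : 0 < σ₂)
    (hσ₁ : 0 < σ₁) (hμ₂ : 0 < μ₂) (hT : 0 < T)
    (hΔ0 : δ = 2 * κr ^ 2 * μ₁ ^ 2 * σ₂ ^ 2 / (μ₂ * σ₁ ^ 2))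
    (ξ : ℝ → ℝ)
    (hξ : ξ = fun t => (κr ^ 2 * μ₁ ^ 2 / σ₁ ^ 2) * (T - t) / (ρ * μ₂ * (T - t) + ρ * μ₂ / δ)) :
    (∀ t ∈ Set.Icc (0 : ℝ) T,
      HasDerivAt ξ (2 * δ * ξ t - 2 * ρ * σ₂ ^ 2 * (ξ t) ^ 2
        - κr ^ 2 * μ₁ ^ 2 * δ / (ρ * μ₂ * σ₁ ^ 2)) t) ∧
    ξ T = 0 := by
  have hμσ : μ₂ * σ₁ ^ 2 ≠ 0 := by positivity
  have hkey : δ * (μ₂ * σ₁ ^ 2) = 2 * κr ^ 2 * μ₁ ^ 2 * σ₂ ^ 2 := by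
    field_simp at hΔ0; linarith [hΔ0]
  subst hξ
  constructor
  · intro t ht
    have hden : ρ * μ₂ * (T - t) + ρ * μ₂ / δ ≠ 0 := by
      have h1 : 0 ≤ T - t := by linarith [ht.2]
      have : 0 < ρ * μ₂ * (T - t) + ρ * μ₂ / δ := by positivity
      exact ne_of_gt this
    have hnum : HasDerivAt (fun t : ℝ => (κr ^ 2 * μ₁ ^ 2 / σ₁ ^ 2) * (T - t))
        (-(κr ^ 2 * μ₁ ^ 2 / σ₁ ^ 2)) t := by
      simpa using ((hasDerivAt_id t).const_sub T).const_mul (κr ^ 2 * μ₁ ^ 2 / σ₁ ^ 2)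
    have hd : HasDerivAt (fun t : ℝ => ρ * μ₂ * (T - t) + ρ * μ₂ / δ)
        (-(ρ * μ₂)) t := by
      simpa using (((hasDerivAt_id t).const_sub T).const_mul (ρ * μ₂)).add_const (ρ * μ₂ / δ)
    have := hnum.div hd hden
    refine this.congr_deriv ?_
    have hσ₁' : σ₁ ≠ 0 := ne_of_gt hσ₁
    have hρ' : ρ ≠ 0 := ne_of_gt hρ
    have hμ₂' : μ₂ ≠ 0 := ne_of_gt hμ₂
    have hδ' : δ ≠ 0 := ne_of_gt hδ
    have h1 : 0 ≤ T - t := by linarith [ht.2]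
    have hE : (0:ℝ) < δ * (T - t) + 1 := by positivity
    have hD : ρ * μ₂ * (T - t) + ρ * μ₂ / δ = ρ * μ₂ / δ * (δ * (T - t) + 1) := by
      field_simp
    have hκμ : κr ^ 2 * μ₁ ^ 2 ≠ 0 := by
      intro h
      nlinarith [hkey, h, mul_pos hδ (mul_pos hμ₂ (pow_pos hσ₁ 2)), sq_nonneg σ₂]
    have hσ₂2 : σ₂ ^ 2 = δ * μ₂ * σ₁ ^ 2 / (2 * (κr ^ 2 * μ₁ ^ 2)) := by
      rw [eq_div_iff (mul_ne_zero two_ne_zero hκμ)]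
      linear_combination -hkey
    rw [hD, hσ₂2]
    field_simp [ne_of_gt hE]
    ring
  · norm_num
end

section
/- Suppose Δ = 0, i.e. δ = 2κ_r²μ₁²σ₂²/(μ₂σ₁²), and let ξ(t) = (κ_r²μ₁²/σ₁²)·(T−t)/(ρμ₂(T−t)+ρμ₂/δ). Then the function η(t) = ((2ι_r + 1)δκ_r²μ₁²/σ₁²) · (T−t)²/(δ(T−t)+1) is the unique solution on [0,T] of the linear ODE η'(t) − (δ − 2ρσ₂²ξ(t)) η(t) + 2ρμ₂(2ι_r+1)ξ(t) = 0 with η(T) = 0. -/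
/-- Δ = 0 case: η(t) = ((2ι_r+1)δκr²μ₁²/σ₁²)(T−t)²/(δ(T−t)+1) is the unique solution on [0,T]
of η'(t) − (δ − 2ρσ₂²ξ(t))η(t) + 2ρμ₂(2ι_r+1)ξ(t) = 0 with η(T) = 0. -/
theorem stmt_6 (δ ρ σ₂ σ₁ μ₂ κr μ₁ ιr T : ℝ) (hδ : 0 < δ) (hρ : 0 < ρ) (hσ₂ : 0 < σ₂)
    (hσ₁ : 0 < σ₁) (hμ₂ : 0 < μ₂) (hT : 0 < T)
    (hΔ0 : δ = 2 * κr ^ 2 * μ₁ ^ 2 * σ₂ ^ 2 / (μ₂ * σ₁ ^ 2))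
    (ξ η : ℝ → ℝ)
    (hξ : ξ = fun t => (κr ^ 2 * μ₁ ^ 2 / σ₁ ^ 2) * (T - t) / (ρ * μ₂ * (T - t) + ρ * μ₂ / δ))
    (hη : η = fun t => ((2 * ιr + 1) * δ * κr ^ 2 * μ₁ ^ 2 / σ₁ ^ 2) *
      (T - t) ^ 2 / (δ * (T - t) + 1)) :
    (∀ t ∈ Set.Icc (0 : ℝ) T,
      HasDerivAt η ((δ - 2 * ρ * σ₂ ^ 2 * ξ t) * η t - 2 * ρ * μ₂ * (2 * ιr + 1) * ξ t) t) ∧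
    η T = 0 ∧
    (∀ f : ℝ → ℝ,
      (∀ t ∈ Set.Icc (0 : ℝ) T,
        HasDerivAt f ((δ - 2 * ρ * σ₂ ^ 2 * ξ t) * f t - 2 * ρ * μ₂ * (2 * ιr + 1) * ξ t) t) →
      f T = 0 → ∀ t ∈ Set.Icc (0 : ℝ) T, f t = η t) := by
  have hσ₁' : σ₁ ≠ 0 := ne_of_gt hσ₁
  have hδ' : δ ≠ 0 := ne_of_gt hδ
  have key : δ * (μ₂ * σ₁ ^ 2) = 2 * κr ^ 2 * μ₁ ^ 2 * σ₂ ^ 2 := by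
    rw [hΔ0]; field_simp
  -- positivity of denominators
  have hDpos : ∀ t : ℝ, 0 ≤ T - t → 0 < δ * (T - t) + 1 := by
    intro t ht; nlinarith [mul_nonneg hδ.le ht]
  have hEpos : ∀ t : ℝ, 0 ≤ T - t → 0 < ρ * μ₂ * (T - t) + ρ * μ₂ / δ := by
    intro t ht
    have h1 : 0 < ρ * μ₂ / δ := by positivity
    nlinarith [mul_nonneg (mul_nonneg hρ.le hμ₂.le) ht]
  -- coefficient simplification
  have hp : ∀ t : ℝ, 0 ≤ T - t →
      δ - 2 * ρ * σ₂ ^ 2 * ξ t = δ / (δ * (T - t) + 1) := by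
    intro t ht
    have hD := (hDpos t ht).ne'
    have hE := (hEpos t ht).ne'
    rw [hξ]
    field_simp
    linear_combination (T - t) * key
  -- derivative of η
  have hder : ∀ t : ℝ, 0 ≤ T - t →
      HasDerivAt η ((δ - 2 * ρ * σ₂ ^ 2 * ξ t) * η t - 2 * ρ * μ₂ * (2 * ιr + 1) * ξ t) t := by
    intro t ht
    have hD := (hDpos t ht).ne'
    have hE := (hEpos t ht).ne'
    set B := (2 * ιr + 1) * δ * κr ^ 2 * μ₁ ^ 2 / σ₁ ^ 2 with hB
    have h1 : HasDerivAt (fun u : ℝ => T - u) (-1) t := by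
      simpa using (hasDerivAt_id t).const_sub T
    have h2 := h1.pow 2
    have h3 := h2.const_mul B
    have h4 : HasDerivAt (fun u : ℝ => δ * (T - u) + 1) (δ * (-1)) t :=
      (h1.const_mul δ).add_const 1
    have h5 := h3.div h4 hD
    rw [hη]
    refine h5.congr_deriv ?_
    rw [hp t ht, hξ, hB]
    simp only [Pi.pow_apply]
    field_simp
    ring
  refine ⟨fun t ht => hder t (by linarith [ht.2]), ?_, ?_⟩
  · rw [hη]; simp
  · intro f hf hfT t ht
    set g : ℝ → ℝ := fun u => (f u - η u) * (δ * (T - u) + 1) with hg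
    have hg' : ∀ u ∈ Set.Icc (0:ℝ) T, HasDerivAt g 0 u := by
      intro u hu
      have hu' : 0 ≤ T - u := by linarith [hu.2]
      have hD := (hDpos u hu').ne'
      have h1 : HasDerivAt (fun v : ℝ => δ * (T - v) + 1) (δ * (-1)) u := by
        have : HasDerivAt (fun v : ℝ => T - v) (-1) u := by
          simpa using (hasDerivAt_id u).const_sub T
        exact (this.const_mul δ).add_const 1
      have h2 := ((hf u hu).sub (hder u hu')).mul h1
      refine h2.congr_deriv ?_
      rw [hp u hu']
      simp only [Pi.sub_apply]
      field_simp
      ring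
    have hcont : ContinuousOn g (Set.Icc 0 T) := fun u hu =>
      ((hg' u hu).continuousAt).continuousWithinAt
    have hconst := constant_of_has_deriv_right_zero hcont
      (fun u hu => ((hg' u (Set.mem_Icc_of_Ico hu)).hasDerivWithinAt))
    have hgT : g T = 0 := by
      have hηT : η T = 0 := by rw [hη]; simp
      simp [hg, hfT, hηT]
    have hg0 : g 0 = 0 := by rw [← hconst T (Set.right_mem_Icc.2 hT.le)]; exact hgT
    have hgt : g t = 0 := by rw [hconst t ht, hg0]
    have hu' : 0 ≤ T - t := by linarith [ht.2]
    have hD := (hDpos t hu').ne'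
    have := mul_eq_zero.1 hgt
    rcases this with h | h
    · linarith [sub_eq_zero.1 (by linarith : f t - η t = 0)]
    · exact absurd h hD
end

section
/- The function L(s,λ) = (e^{−δ(t−s)}λ + (ρμ₂/δ)(1 − e^{−δ(t−s)}))² + (ρσ₂²/(2δ))(1 − e^{−2δ(t−s)}) solves the backward equation ∂_s L − δλ ∂_λ L + ρ∫_{(0,∞)} (L(s,λ+z) − L(s,λ)) F₂(dz) = 0 for s ≤ t, with terminal condition L(t,λ) = λ². -/
open MeasureTheory

/-- L(s,λ) = (e^{−δ(t−s)}λ + (ρμ₂/δ)(1−e^{−δ(t−s)}))² + (ρσ₂²/(2δ))(1−e^{−2δ(t−s)})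
solves ∂ₛL − δλ∂_λL + ρ∫(L(s,λ+z) − L(s,λ))F₂(dz) = 0 for s ≤ t, with L(t,λ) = λ². -/
theorem stmt_12 (δ ρ t : ℝ) (hδ : 0 < δ) (hρ : 0 < ρ) (ht : 0 < t)
    (F₂ : Measure ℝ) [IsProbabilityMeasure F₂] (hsupp : F₂ (Set.Iic 0) = 0)
    (hint1 : Integrable (fun z => z) F₂) (hint2 : Integrable (fun z => z ^ 2) F₂)
    (μ₂ σ₂sq : ℝ) (hμ₂ : μ₂ = ∫ z, z ∂F₂) (hσ₂ : σ₂sq = ∫ z, z ^ 2 ∂F₂)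
    (L : ℝ → ℝ → ℝ)
    (hL : L = fun s lam =>
      (Real.exp (-δ * (t - s)) * lam + (ρ * μ₂ / δ) * (1 - Real.exp (-δ * (t - s)))) ^ 2
        + (ρ * σ₂sq / (2 * δ)) * (1 - Real.exp (-2 * δ * (t - s)))) :
    (∀ lam : ℝ, L t lam = lam ^ 2) ∧
    (∀ s lam : ℝ, s ≤ t → ∃ Ls Llam : ℝ,
      HasDerivAt (fun u => L u lam) Ls s ∧
      HasDerivAt (fun y => L s y) Llam lam ∧
      Ls - δ * lam * Llam + ρ * ∫ z, (L s (lam + z) - L s lam) ∂F₂ = 0) := by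
  subst hL hμ₂ hσ₂
  set μ₂ := ∫ z, z ∂F₂ with hμ₂
  set σ₂sq := ∫ z, z ^ 2 ∂F₂ with hσ₂
  constructor
  · intro lam
    simp
  · intro s lam hst
    set c : ℝ := ρ * μ₂ / δ with hc
    set d : ℝ := ρ * σ₂sq / (2 * δ) with hd
    set e : ℝ := Real.exp (-δ * (t - s)) with he
    set e2 : ℝ := Real.exp (-2 * δ * (t - s)) with he2
    have hee : e2 = e ^ 2 := by
      rw [he, he2, ← Real.exp_nat_mul]
      ring_nf
    set A : ℝ := e * lam + c * (1 - e) with hA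
    -- derivative in s
    have hexp : HasDerivAt (fun u : ℝ => Real.exp (-δ * (t - u))) (e * δ) s := by
      have h1 : HasDerivAt (fun u : ℝ => -δ * (t - u)) (-δ * (0 - 1)) s :=
        ((hasDerivAt_const s t).sub (hasDerivAt_id s)).const_mul (-δ)
      have := h1.exp
      simpa [he] using this.congr_deriv (by ring)
    have hexp2 : HasDerivAt (fun u : ℝ => Real.exp (-2 * δ * (t - u))) (e2 * (2 * δ)) s := by
      have h1 : HasDerivAt (fun u : ℝ => -2 * δ * (t - u)) (-2 * δ * (0 - 1)) s :=
        ((hasDerivAt_const s t).sub (hasDerivAt_id s)).const_mul (-2 * δ)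
      have := h1.exp
      simpa [he2] using this.congr_deriv (by ring)
    have hDs : HasDerivAt (fun u : ℝ =>
        (Real.exp (-δ * (t - u)) * lam + c * (1 - Real.exp (-δ * (t - u)))) ^ 2
          + d * (1 - Real.exp (-2 * δ * (t - u))))
        (2 * A * (e * δ * lam - c * (e * δ)) - d * (e2 * (2 * δ))) s := by
      have hinner : HasDerivAt (fun u : ℝ =>
          Real.exp (-δ * (t - u)) * lam + c * (1 - Real.exp (-δ * (t - u))))
          (e * δ * lam - c * (e * δ)) s := by
        have := (hexp.mul_const lam).add (((hasDerivAt_const s (1:ℝ)).sub hexp).const_mul c)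
        exact this.congr_deriv (by ring)
      have hsq := hinner.pow 2
      have hrest := ((hasDerivAt_const s (1:ℝ)).sub hexp2).const_mul d
      have := hsq.add hrest
      refine this.congr_deriv ?_
      rw [hA, he]
      push_cast
      ring
    -- derivative in lam
    have hDl : HasDerivAt (fun y : ℝ =>
        (e * y + c * (1 - e)) ^ 2 + d * (1 - e2)) (2 * A * e) lam := by
      have hinner : HasDerivAt (fun y : ℝ => e * y + c * (1 - e)) e lam := by
        simpa using ((hasDerivAt_id lam).const_mul e).add_const (c * (1 - e))
      have := (hinner.pow 2).add_const (d * (1 - e2))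
      refine this.congr_deriv ?_
      rw [hA]
      push_cast
      ring
    refine ⟨_, _, hDs, hDl, ?_⟩
    -- compute the integral
    have hptw : ∀ z : ℝ,
        ((e * (lam + z) + c * (1 - e)) ^ 2 + d * (1 - e2))
          - ((e * lam + c * (1 - e)) ^ 2 + d * (1 - e2))
        = (2 * A * e) * z + e ^ 2 * z ^ 2 := by
      intro z; rw [hA]; ring
    have hintegral : (∫ z, (((e * (lam + z) + c * (1 - e)) ^ 2 + d * (1 - e2))
          - ((e * lam + c * (1 - e)) ^ 2 + d * (1 - e2))) ∂F₂)
        = (2 * A * e) * μ₂ + e ^ 2 * σ₂sq := by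
      simp_rw [hptw]
      rw [integral_add (hint1.const_mul _) (hint2.const_mul _),
        integral_const_mul, integral_const_mul]
    rw [hintegral, hee, hA, hc, hd]
    field_simp
    ring
end
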